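/- Let I be a secure network-coding instance and I' its augmented instance. Then I admits a valid secure (possibly randomised) network code with source rates R_S and block size n if and only if I' admits a valid secure deterministic network code with source rates R'_{S'} (where R'_s = R_s for s ∈ S and R'_{S̄+v} = k_v for v ∈ V) and block size n: the randomness Z_v used at each node v of I is realised by the additional source X'_{S̄+v} of I', and conversely. -/

import Mathlib

open scoped Classical

noncomputable section

/-! ### Finite probability: pmf, events, distributions, Shannon entropy -/

structure FinPMF (Ω : Type) [Fintype Ω] where
  p : Ω → ℝ
  nonneg : ∀ ω, 0 ≤ p ω
  sum_one : ∑ ω, p ω = 1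

namespace FinPMF

variable {Ω : Type} [Fintype Ω]

/-- Probability of an event. -/
def prob (μ : FinPMF Ω) (E : Ω → Prop) : ℝ := ∑ ω, if E ω then μ.p ω else 0

/-- Distribution (pushforward pmf) of a random variable `X`. -/
def dist {A : Type} [Fintype A] (μ : FinPMF Ω) (X : Ω → A) (a : A) : ℝ :=
  μ.prob fun ω => X ω = a

/-- Shannon entropy of the random variable `X` (natural logarithm). -/
def entH {A : Type} [Fintype A] (μ : FinPMF Ω) (X : Ω → A) : ℝ :=
  -∑ a, μ.dist X a * Real.log (μ.dist X a)

/-- Conditional Shannon entropy `H(X | Y)`. -/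
def condH {A B : Type} [Fintype A] [Fintype B] (μ : FinPMF Ω) (X : Ω → A) (Y : Ω → B) : ℝ :=
  μ.entH (fun ω => (X ω, Y ω)) - μ.entH Y

/-- Mutual information `I(X ; Y)`. -/
def mutI {A B : Type} [Fintype A] [Fintype B] (μ : FinPMF Ω) (X : Ω → A) (Y : Ω → B) : ℝ :=
  μ.entH X + μ.entH Y - μ.entH (fun ω => (X ω, Y ω))

/-- Independence of two random variables. -/
def Indep {A B : Type} [Fintype A] [Fintype B] (μ : FinPMF Ω) (X : Ω → A) (Y : Ω → B) : Prop :=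
  ∀ a b, μ.dist (fun ω => (X ω, Y ω)) (a, b) = μ.dist X a * μ.dist Y b

/-- `X` is uniformly distributed. -/
def IsUniform {A : Type} [Fintype A] (μ : FinPMF Ω) (X : Ω → A) : Prop :=
  ∀ a, μ.dist X a = (Fintype.card A : ℝ)⁻¹

/-- The conditional probability measure given an event of positive probability. -/
def cond (μ : FinPMF Ω) (E : Ω → Prop) (h : 0 < μ.prob E) : FinPMF Ω where
  p ω := if E ω then μ.p ω / μ.prob E else 0
  nonneg ω := by
    (try dsimp only); split
    · exact div_nonneg (μ.nonneg ω) h.le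
    · exact le_rfl
  sum_one := by
    have h1 : ∀ ω ∈ Finset.univ,
        (if E ω then μ.p ω / μ.prob E else 0) = (if E ω then μ.p ω else 0) / μ.prob E := by
      intro ω _; split <;> simp
    rw [Finset.sum_congr rfl h1, ← Finset.sum_div]
    exact div_self h.ne'

end FinPMF

/-- Product of two pmfs (independent coupling). -/
def prodPMF {A B : Type} [Fintype A] [Fintype B] (μ : FinPMF A) (ν : FinPMF B) :
    FinPMF (A × B) where
  p x := μ.p x.1 * ν.p x.2
  nonneg x := mul_nonneg (μ.nonneg _) (ν.nonneg _)
  sum_one := by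
    rw [Fintype.sum_prod_type]
    simp_rw [← Finset.mul_sum, ν.sum_one, mul_one]
    exact μ.sum_one

/-- Product of a finite family of pmfs (mutually independent coupling). -/
def piPMF {ι : Type} [Fintype ι] {α : ι → Type} [∀ i, Fintype (α i)]
    (μ : ∀ i, FinPMF (α i)) : FinPMF (∀ i, α i) where
  p x := ∏ i, (μ i).p (x i)
  nonneg x := Finset.prod_nonneg fun i _ => (μ i).nonneg _
  sum_one := by
    rw [← Fintype.prod_sum (fun i a => (μ i).p a)]
    rw [Finset.prod_congr rfl fun i _ => (μ i).sum_one]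
    exact Finset.prod_const_one

/-- The trivial pmf on a singleton type. -/
def unitPMF : FinPMF PUnit where
  p _ := 1
  nonneg _ := zero_le_one
  sum_one := by simp

/-- The uniform pmf on a nonempty finite type. -/
def uniformPMF (A : Type) [Fintype A] (h : Nonempty A) : FinPMF A where
  p _ := (Fintype.card A : ℝ)⁻¹
  nonneg _ := by positivity
  sum_one := by
    haveI := h
    rw [Finset.sum_const, Finset.card_univ, nsmul_eq_mul]
    exact mul_inv_cancel₀ (Nat.cast_ne_zero.mpr Fintype.card_ne_zero)

/-! ### Alphabets of rate `r` and block length `n`, i.e. `[2^{r n}]` -/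

/-- Size of the alphabet `[2^{r n}]`. -/
def asize (r : ℝ) (n : ℕ) : ℕ := ⌊(2:ℝ) ^ (r * n)⌋₊

/-- The alphabet `[2^{r n}]`. -/
abbrev alpha (r : ℝ) (n : ℕ) : Type := Fin (asize r n)

lemma alpha_nonempty {r : ℝ} (hr : 0 ≤ r) (n : ℕ) : Nonempty (alpha r n) := by
  have h1 : (1:ℝ) ≤ (2:ℝ) ^ (r * n) := Real.one_le_rpow one_le_two (by positivity)
  have h2 : 1 ≤ asize r n := Nat.le_floor (by exact_mod_cast h1)
  exact ⟨⟨0, lt_of_lt_of_le zero_lt_one h2⟩⟩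

end

noncomputable section

open scoped Classical

/-! ### Secure network-coding instances and (randomised) network codes -/

/-- A secure network-coding instance `I = (G, M, W)`: a finite directed acyclic graph
`G = (V, E)` (acyclicity is witnessed by a topological ordering `ord`) with nonnegative
edge capacities `c`, a connection requirement `M = (S, O, D)` consisting of mutually
independent source messages `X_s` of rate `R s` (distributed on `[2^{R s · n}]`
according to `μ s`), originating nodes `O` and destination nodes `D`, and an
eavesdropping pattern `W = ((A r, B r) : r ∈ Rε)` where eavesdropper `r` observes the
edges in `B r` and tries to reconstruct the messages indexed by `A r`. -/
structure NCInstance where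
  V : Type
  E : Type
  S : Type
  Rε : Type
  [fV : Fintype V]
  [fE : Fintype E]
  [fS : Fintype S]
  [fRε : Fintype Rε]
  tail : E → V
  head : E → V
  ord : V → ℕ
  acyclic : ∀ e, ord (tail e) < ord (head e)
  c : E → ℝ
  cnn : ∀ e, 0 ≤ c e
  n : ℕ
  npos : 0 < n
  R : S → ℝ
  μ : ∀ s, FinPMF (alpha (R s) n)
  O : S → V
  D : S → Finset V
  A : Rε → Finset S
  B : Rε → Finset E

attribute [instance] NCInstance.fV NCInstance.fE NCInstance.fS NCInstance.fRε

/-- The alphabet of the source message `X_s`. -/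
abbrev NCInstance.Msg (I : NCInstance) (s : I.S) : Type := alpha (I.R s) I.n

/-- A tuple of realisations of all source messages. -/
abbrev NCInstance.SrcTuple (I : NCInstance) : Type := ∀ s : I.S, I.Msg s

/-- The edges entering a node. -/
abbrev NCInstance.InE (I : NCInstance) (v : I.V) : Type := {e : I.E // I.head e = v}

/-- The edges leaving a node. -/
abbrev NCInstance.OutE (I : NCInstance) (v : I.V) : Type := {e : I.E // I.tail e = v}

/-- The source messages originating at a node. -/
abbrev NCInstance.SrcAt (I : NCInstance) (v : I.V) : Type := {s : I.S // I.O s = v}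

/-- The source messages demanded by a node. -/
abbrev NCInstance.DemAt (I : NCInstance) (v : I.V) : Type := {s : I.S // v ∈ I.D s}

/-- The alphabet `[2^{c e · n}]` of the message carried by an edge `e`. -/
abbrev EAc (I : NCInstance) (e : I.E) : Type := alpha (I.c e) I.n

/-- The key rate `k_v = ∑_{e ∈ out(v)} c_e` of a node `v`. -/
def kRate (I : NCInstance) (v : I.V) : ℝ :=
  ∑ e ∈ Finset.univ.filter (fun e : I.E => I.tail e = v), I.c e

lemma kRate_nonneg (I : NCInstance) (v : I.V) : 0 ≤ kRate I v :=
  Finset.sum_nonneg fun e _ => I.cnn e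

/-- The alphabet of the random key `Z_v` of node `v`, of size `∏_{e ∈ out(v)} 2^{c_e n}`
(that is, `2^{k_v n}`). -/
abbrev KeyA (I : NCInstance) (v : I.V) : Type := alpha (kRate I v) I.n

/-- A tuple of realisations of all random keys. -/
abbrev KeyTuple (I : NCInstance) : Type := ∀ v : I.V, KeyA I v

/-- A (possibly randomised) network code for the instance `I`.  Each node `v` generates an
independent random key `Z_v` distributed according to `κ v`; a deterministic code is one
whose local encoders do not depend on the keys.  The local encoding function `f e` maps
the messages on the incoming edges of `tail e`, the source messages originating at
`tail e`, and the key of `tail e` to the message transmitted on `e`.  The decoding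
function `g v` maps the messages on the incoming edges of `v` and the source messages
originating at `v` to the tuple of source messages demanded by `v`. -/
structure NCCode (I : NCInstance) where
  κ : ∀ v : I.V, FinPMF (KeyA I v)
  f : ∀ e : I.E, (∀ e' : I.InE (I.tail e), EAc I e'.1) →
      (∀ s : I.SrcAt (I.tail e), I.Msg s.1) → KeyA I (I.tail e) → EAc I e
  g : ∀ v : I.V, (∀ e' : I.InE v, EAc I e'.1) →
      (∀ s : I.SrcAt v, I.Msg s.1) → ∀ s : I.DemAt v, I.Msg s.1

/-- A family of global encoding functions: a candidate value `Xe e x z` for the message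
carried by edge `e` when the sources are `x` and the keys are `z`. -/
abbrev GlobalEnc (I : NCInstance) : Type := ∀ e : I.E, I.SrcTuple → KeyTuple I → EAc I e

variable {I : NCInstance}

/-- The joint probability measure of the (mutually independent) source messages and
random keys. -/
def ncP (I : NCInstance) (C : NCCode I) : FinPMF (I.SrcTuple × KeyTuple I) :=
  prodPMF (piPMF I.μ) (piPMF C.κ)

/-- `Xe` is the family of global encoding functions of the code `C`: on every edge, the
transmitted message is obtained by applying the local encoding function to the messages
on the incoming edges, the locally originating sources, and the local key. -/
def NCCode.IsGlobal (C : NCCode I) (Xe : GlobalEnc I) : Prop :=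
  ∀ e x z, Xe e x z = C.f e (fun e' => Xe e'.1 x z) (fun s => x s.1) (z (I.tail e))

/-- The code is deterministic: no local encoder depends on the random keys. -/
def NCCode.Deterministic (C : NCCode I) : Prop :=
  ∀ e ins srcs z z', C.f e ins srcs z = C.f e ins srcs z'

/-- Validity (with global encoding functions `Xe`): `Xe` is the family of global encoding
functions of `C` and every destination node decodes the messages it demands with zero
error. -/
def NCCode.ValidWith (C : NCCode I) (Xe : GlobalEnc I) : Prop :=
  C.IsGlobal Xe ∧
    ∀ x z, 0 < (ncP I C).p (x, z) →
      ∀ v (s : I.DemAt v), C.g v (fun e' => Xe e'.1 x z) (fun s' => x s'.1) s = x s.1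

/-- Security (with global encoding functions `Xe`): each eavesdropper `r`, observing the
messages carried by the edges in `B r`, gains no information about the source messages
indexed by `A r`, i.e. `H(X_{A r} | X_{B r}) = H(X_{A r})`. -/
def NCCode.SecureWith (C : NCCode I) (Xe : GlobalEnc I) : Prop :=
  ∀ r : I.Rε,
    (ncP I C).condH (fun ω => fun s : (I.A r) => ω.1 s.1)
        (fun ω => fun e : (I.B r) => Xe e.1 ω.1 ω.2)
      = (ncP I C).entH (fun ω => fun s : (I.A r) => ω.1 s.1)

/-! ### Secure index-coding instances and (randomised) index codes -/

/-- A secure index-coding instance `Î = (Ŝ, T̂, {Ŵ_t}, {Ĥ_t}, Ŵ)`: a sender has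
mutually independent messages `X̂ s`, `s ∈ Ŝ`, of rate `Rhat s` (distributed on
`[2^{Rhat s · n}]` according to `μ s`); receiver `t ∈ T̂` knows the messages `Ht t` a
priori and must decode the messages `Wt t`; eavesdropper `r ∈ Rε` observes the broadcast
codeword and the messages `B r`, and tries to reconstruct the messages `A r`. -/
structure ICInstance where
  Shat : Type
  That : Type
  Rε : Type
  [fS : Fintype Shat]
  [fT : Fintype That]
  [fRε : Fintype Rε]
  n : ℕ
  npos : 0 < n
  Rhat : Shat → ℝ
  μ : ∀ s, FinPMF (alpha (Rhat s) n)
  Wt : That → Finset Shat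
  Ht : That → Finset Shat
  A : Rε → Finset Shat
  B : Rε → Finset Shat

attribute [instance] ICInstance.fS ICInstance.fT ICInstance.fRε

/-- The alphabet of the message `X̂ s`. -/
abbrev ICInstance.Msg (J : ICInstance) (s : J.Shat) : Type := alpha (J.Rhat s) J.n

/-- A tuple of realisations of all messages. -/
abbrev ICInstance.SrcTuple (J : ICInstance) : Type := ∀ s : J.Shat, J.Msg s

/-- A (possibly randomised) index code for the instance `J`: the sender encodes the
messages together with an independent random key `Ẑ` (taking values in `K`, distributed
according to `κ`, and known only to the sender) into a broadcast codeword in `BC`;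
receiver `t` decodes from the broadcast codeword and its side information. -/
structure ICCode (J : ICInstance) where
  BC : Type
  [fBC : Fintype BC]
  K : Type
  [fK : Fintype K]
  κ : FinPMF K
  enc : J.SrcTuple → K → BC
  dec : ∀ t : J.That, BC → (∀ s : (J.Ht t), J.Msg s.1) → ∀ s : (J.Wt t), J.Msg s.1

attribute [instance] ICCode.fBC ICCode.fK

variable {J : ICInstance}

/-- The joint probability measure of the (mutually independent) messages and the
sender's random key. -/
def icP (J : ICInstance) (C : ICCode J) : FinPMF (J.SrcTuple × C.K) :=
  prodPMF (piPMF J.μ) C.κ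

/-- The broadcast alphabet respects the broadcast rate `cb`: it has at most `2^{cb · n}`
elements. -/
def ICCode.RateOK (C : ICCode J) (cb : ℝ) : Prop :=
  Fintype.card C.BC ≤ asize cb J.n

/-- Validity at broadcast rate `cb`: the broadcast rate is respected and every receiver
decodes the messages it demands with zero error from the broadcast codeword and its side
information. -/
def ICCode.Valid (C : ICCode J) (cb : ℝ) : Prop :=
  C.RateOK cb ∧
    ∀ x z, 0 < (icP J C).p (x, z) →
      ∀ t (s : (J.Wt t)), C.dec t (C.enc x z) (fun s' => x s'.1) s = x s.1

/-- Security: each eavesdropper `r`, observing the broadcast codeword and the messages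
indexed by `B r`, gains no information about the messages indexed by `A r`, i.e.
`H(X̂_{A r} | X̂_b, X̂_{B r}) = H(X̂_{A r})`. -/
def ICCode.Secure (C : ICCode J) : Prop :=
  ∀ r : J.Rε,
    (icP J C).condH (fun ω => fun s : (J.A r) => ω.1 s.1)
        (fun ω => (C.enc ω.1 ω.2, fun s : (J.B r) => ω.1 s.1))
      = (icP J C).entH (fun ω => fun s : (J.A r) => ω.1 s.1)

/-- `(R̂_Ŝ, ĉ_b, n)`-feasibility of the secure index-coding instance `J`: there is a
valid secure (deterministic or randomised) index code of broadcast rate `cb`. -/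
def ICFeasible (J : ICInstance) (cb : ℝ) : Prop :=
  ∃ C : ICCode J, C.Valid cb ∧ C.Secure

/-! ### The augmented secure network-coding instance -/

/-- The source-index set `S' = S ∪ {S̄ + v : v ∈ V}` of the augmented instance. -/
abbrev augS (I : NCInstance) : Type := I.S ⊕ I.V

/-- Rates of the augmented sources: original sources keep their rates, and the additional
source at node `v` has rate `k_v`. -/
def augR (I : NCInstance) : augS I → ℝ
  | .inl s => I.R s
  | .inr v => kRate I v

/-- Origins of the augmented sources: the additional source `X'_{S̄+v}` originates at
node `v`. -/
def augO (I : NCInstance) : augS I → I.V := Sum.elim I.O id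

/-- Destinations of the augmented sources: the additional sources are demanded by no
node. -/
def augD (I : NCInstance) : augS I → Finset I.V
  | .inl s => I.D s
  | .inr _ => ∅

/-- **The augmented secure network-coding instance** `I' = (G', M', W')` associated with
`I` and key distributions `κ`: same graph, capacities and eavesdropping pattern; for each
vertex `v` an additional source `X'_{S̄+v}`, distributed as the random key `Z_v` (i.e.
according to `κ v`, on an alphabet of size `2^{k_v n}`), originates at `v` and is
demanded by no node.  The additional sources are neither known to the eavesdroppers nor
required to be protected. -/
def aug (I : NCInstance) (κ : ∀ v : I.V, FinPMF (KeyA I v)) : NCInstance where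
  V := I.V
  E := I.E
  S := augS I
  Rε := I.Rε
  fV := inferInstance
  fE := inferInstance
  fS := inferInstance
  fRε := inferInstance
  tail := I.tail
  head := I.head
  ord := I.ord
  acyclic := I.acyclic
  c := I.c
  cnn := I.cnn
  n := I.n
  npos := I.npos
  R := augR I
  μ := fun s => match s with
    | .inl s => I.μ s
    | .inr v => κ v
  O := augO I
  D := augD I
  A := fun r => (I.A r).image Sum.inl
  B := I.B

/-! ### The network-to-index coding mapping -/

/-- The set `T'` of vertices of `I` that are destinations of some source message. -/
abbrev Tp (I : NCInstance) : Type := {v : I.V // ∃ s : I.S, v ∈ I.D s}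

/-- Side information of the receiver associated with a vertex `v`:
`in(v) ∪ O'⁻¹(v)`, i.e. the messages associated with the edges entering `v` together
with the (augmented) sources originating at `v`. -/
def htSet (I : NCInstance) (v : I.V) : Finset (augS I ⊕ I.E) :=
  ((Finset.univ.filter fun e : I.E => I.head e = v).image Sum.inr) ∪
    ((Finset.univ.filter fun s' : augS I => augO I s' = v).image Sum.inl)

/-- Demands of the receiver associated with a destination vertex `v`: the original
source messages demanded by `v`. -/
def dWt (I : NCInstance) (v : I.V) : Finset (augS I ⊕ I.E) :=
  (Finset.univ.filter fun s : I.S => v ∈ I.D s).image fun s => Sum.inl (Sum.inl s)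

/-- Message rates of the index-coding instance: rate `R' s'` for `s' ∈ S'` and rate
`c e` for `e ∈ E'`. -/
def n2iR (I : NCInstance) : augS I ⊕ I.E → ℝ
  | .inl s' => augR I s'
  | .inr e => I.c e

/-- The broadcast rate `ĉ_b = ∑_{e ∈ E'} c_e`. -/
def cbRate (I : NCInstance) : ℝ := ∑ e : I.E, I.c e

/-- **Network-to-index coding mapping.**  The secure index-coding instance `Î` obtained
from the augmented instance of `I` (with key distributions `κ`): one message per
augmented source `s' ∈ S'` (with its distribution) and one message per edge `e ∈ E'`
(mutually independent and uniform on `[2^{c_e n}]`); one receiver `t̂_e` per edge,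
knowing `in(tail e) ∪ O'⁻¹(tail e)` and demanding `{e}`, and one receiver `t̂_i` per
destination vertex `i ∈ T'`, knowing `in(i) ∪ O'⁻¹(i)` and demanding
`{s ∈ S : i ∈ D s}`; eavesdropper `r` knows the messages `B r` (as edge messages) and
tries to reconstruct the messages `A r` (as source messages). -/
def net2idx (I : NCInstance) (κ : ∀ v : I.V, FinPMF (KeyA I v)) : ICInstance where
  Shat := augS I ⊕ I.E
  That := Tp I ⊕ I.E
  Rε := I.Rε
  fS := inferInstance
  fT := inferInstance
  fRε := inferInstance
  n := I.n
  npos := I.npos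
  Rhat := n2iR I
  μ := fun s => match s with
    | .inl (.inl s) => I.μ s
    | .inl (.inr v) => κ v
    | .inr e => uniformPMF _ (alpha_nonempty (I.cnn e) I.n)
  Wt := fun t => match t with
    | .inl vt => dWt I vt.1
    | .inr e => {Sum.inr e}
  Ht := fun t => match t with
    | .inl vt => htSet I vt.1
    | .inr e => htSet I (I.tail e)
  A := fun r => (I.A r).image fun s => Sum.inl (Sum.inl s)
  B := fun r => (I.B r).image Sum.inr

/-! ### Helper lemmas about the mapping -/

lemma mem_htSet_inr (I : NCInstance) (v : I.V) (e : I.E) :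
    (Sum.inr e : augS I ⊕ I.E) ∈ htSet I v ↔ I.head e = v := by
  simp [htSet]

lemma mem_htSet_inl (I : NCInstance) (v : I.V) (s' : augS I) :
    (Sum.inl s' : augS I ⊕ I.E) ∈ htSet I v ↔ augO I s' = v := by
  simp [htSet]

lemma mem_dWt_inl_inl (I : NCInstance) (v : I.V) (s : I.S) :
    (Sum.inl (Sum.inl s) : augS I ⊕ I.E) ∈ dWt I v ↔ v ∈ I.D s := by
  simp [dWt]

lemma not_mem_dWt_inl_inr (I : NCInstance) (v : I.V) (v' : I.V) :
    (Sum.inl (Sum.inr v') : augS I ⊕ I.E) ∉ dWt I v := by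
  simp [dWt]

lemma not_mem_dWt_inr (I : NCInstance) (v : I.V) (e : I.E) :
    (Sum.inr e : augS I ⊕ I.E) ∉ dWt I v := by
  simp [dWt]

/-- A default (fixed) realisation of the random keys, playing the role of the all-zeros
key. -/
def zdef (I : NCInstance) : KeyTuple I :=
  fun v => Classical.choice (alpha_nonempty (kRate_nonneg I v) I.n)

end

/-! ### Auxiliary lemmas -/

noncomputable section

open scoped Classical

section ProbAux

variable {Ω Ω' : Type} [Fintype Ω] [Fintype Ω']

lemma FinPMF.exists_pos (μ : FinPMF Ω) : ∃ a, 0 < μ.p a := by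
  by_contra h
  push_neg at h
  have hz : ∀ a ∈ Finset.univ, μ.p a = 0 := fun a _ => le_antisymm (h a) (μ.nonneg a)
  have := μ.sum_one
  rw [Finset.sum_congr rfl hz, Finset.sum_const_zero] at this
  exact zero_ne_one this

lemma prod_pos_of_prod_pos {ι : Type} [Fintype ι] {f : ι → ℝ} (h0 : ∀ i, 0 ≤ f i)
    (hp : 0 < ∏ i, f i) (i : ι) : 0 < f i := by
  rcases lt_or_eq_of_le (h0 i) with h | h
  · exact h
  · exact absurd (Finset.prod_eq_zero (Finset.mem_univ i) h.symm) hp.ne'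

lemma two_prod_pos {ι1 ι2 : Type} [Fintype ι1] [Fintype ι2] {f : ι1 → ℝ} {g : ι2 → ℝ}
    (hf : ∀ i, 0 ≤ f i) (hg : ∀ j, 0 ≤ g j) (h : 0 < (∏ i, f i) * ∏ j, g j) :
    (∀ i, 0 < f i) ∧ (∀ j, 0 < g j) := by
  have h1 : 0 < ∏ i, f i := by
    rcases mul_pos_iff.mp h with ⟨a, _⟩ | ⟨a, _⟩
    · exact a
    · exact absurd (Finset.prod_nonneg fun i _ => hf i) (not_le.mpr a)
  have h2 : 0 < ∏ j, g j := by
    rcases mul_pos_iff.mp h with ⟨_, b⟩ | ⟨_, b⟩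
    · exact b
    · exact absurd (Finset.prod_nonneg fun j _ => hg j) (not_le.mpr b)
  exact ⟨fun i => prod_pos_of_prod_pos hf h1 i, fun j => prod_pos_of_prod_pos hg h2 j⟩

lemma dist_comp (μ' : FinPMF Ω') (μ : FinPMF Ω) (φ : Ω' → Ω)
    (h : ∀ ω, μ'.dist φ ω = μ.p ω) {A : Type} [Fintype A] (X : Ω → A) (a : A) :
    μ'.dist (fun ω' => X (φ ω')) a = μ.dist X a := by
  unfold FinPMF.dist FinPMF.prob
  calc ∑ ω', (if X (φ ω') = a then μ'.p ω' else 0)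
      = ∑ ω', ∑ ω, (if φ ω' = ω then (if X ω = a then μ'.p ω' else 0) else 0) := by
        refine Finset.sum_congr rfl fun ω' _ => ?_
        rw [Finset.sum_ite_eq]
        simp
    _ = ∑ ω, ∑ ω', (if φ ω' = ω then (if X ω = a then μ'.p ω' else 0) else 0) :=
        Finset.sum_comm
    _ = ∑ ω, (if X ω = a then μ.p ω else 0) := by
        refine Finset.sum_congr rfl fun ω _ => ?_
        rw [← h ω]
        unfold FinPMF.dist FinPMF.prob
        by_cases hx : X ω = a <;> simp [hx]

lemma entH_comp (μ' : FinPMF Ω') (μ : FinPMF Ω) (φ : Ω' → Ω)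
    (h : ∀ ω, μ'.dist φ ω = μ.p ω) {A : Type} [Fintype A] (X : Ω → A) :
    μ'.entH (fun ω' => X (φ ω')) = μ.entH X := by
  unfold FinPMF.entH
  congr 1
  exact Finset.sum_congr rfl fun a _ => by rw [dist_comp μ' μ φ h X a]

lemma entH_comp_inj (μ : FinPMF Ω) {A B : Type} [Fintype A] [Fintype B]
    (e : A → B) (he : Function.Injective e) (X : Ω → A) :
    μ.entH (fun ω => e (X ω)) = μ.entH X := by
  unfold FinPMF.entH
  congr 1
  have hd : ∀ a, μ.dist (fun ω => e (X ω)) (e a) = μ.dist X a := by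
    intro a
    unfold FinPMF.dist FinPMF.prob
    exact Finset.sum_congr rfl fun ω _ => by simp [he.eq_iff]
  have hz : ∀ b ∈ Finset.univ, b ∉ Finset.univ.image e →
      μ.dist (fun ω => e (X ω)) b * Real.log (μ.dist (fun ω => e (X ω)) b) = 0 := by
    intro b _ hb
    have : μ.dist (fun ω => e (X ω)) b = 0 := by
      unfold FinPMF.dist FinPMF.prob
      refine Finset.sum_eq_zero fun ω _ => ?_
      rw [if_neg]
      intro hc
      exact hb (Finset.mem_image.mpr ⟨X ω, Finset.mem_univ _, hc⟩)
    rw [this, zero_mul]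
  rw [← Finset.sum_subset (Finset.subset_univ (Finset.univ.image e)) hz,
    Finset.sum_image (fun a _ a' _ hh => he hh)]
  exact Finset.sum_congr rfl fun a _ => by rw [hd a]

lemma secure_transfer (μ : FinPMF Ω) (μ' : FinPMF Ω') (φ : Ω' → Ω)
    (h : ∀ ω, μ'.dist φ ω = μ.p ω) {A A' B : Type} [Fintype A] [Fintype A'] [Fintype B]
    (e1 : A → A') (he1 : Function.Injective e1) (XA : Ω → A) (YB : Ω → B) :
    (μ'.condH (fun ω' => e1 (XA (φ ω'))) (fun ω' => YB (φ ω'))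
        = μ'.entH (fun ω' => e1 (XA (φ ω'))))
      ↔ (μ.condH XA YB = μ.entH XA) := by
  have h1 : μ'.entH (fun ω' => e1 (XA (φ ω'))) = μ.entH XA :=
    (entH_comp_inj μ' e1 he1 (fun ω' => XA (φ ω'))).trans (entH_comp μ' μ φ h XA)
  have h2 : μ'.entH (fun ω' => YB (φ ω')) = μ.entH YB := entH_comp μ' μ φ h YB
  have hinj : Function.Injective (fun p : A × B => (e1 p.1, p.2)) := by
    intro p q hpq
    obtain ⟨a, b⟩ := p
    obtain ⟨c, d⟩ := q
    simp only [Prod.mk.injEq] at hpq ⊢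
    exact ⟨he1 hpq.1, hpq.2⟩
  have h3 : μ'.entH (fun ω' => (e1 (XA (φ ω')), YB (φ ω'))) =
      μ.entH (fun ω => (XA ω, YB ω)) :=
    (entH_comp_inj μ' (fun p : A × B => (e1 p.1, p.2)) hinj
      (fun ω' => (XA (φ ω'), YB (φ ω')))).trans
      (entH_comp μ' μ φ h (X := fun ω => (XA ω, YB ω)))
  simp only [FinPMF.condH]
  rw [h1, h2, h3]

lemma secure_core (μ : FinPMF Ω) (μ' : FinPMF Ω') (φ : Ω' → Ω)
    (h : ∀ ω, μ'.dist φ ω = μ.p ω) {A A' B B' : Type}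
    [Fintype A] [Fintype A'] [Fintype B] [Fintype B']
    {XA : Ω → A} {YB : Ω → B} {X' : Ω' → A'} {Y' : Ω' → B'}
    (eX : A → A') (heX : Function.Injective eX) (eY : B → B') (heY : Function.Injective eY)
    (hX : ∀ ω', X' ω' = eX (XA (φ ω'))) (hY : ∀ ω', Y' ω' = eY (YB (φ ω'))) :
    (μ'.condH X' Y' = μ'.entH X') ↔ (μ.condH XA YB = μ.entH XA) := by
  have hXf : X' = fun ω' => eX (XA (φ ω')) := funext hX
  have hYf : Y' = fun ω' => eY (YB (φ ω')) := funext hY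
  subst hXf
  subst hYf
  have h1 : μ'.entH (fun ω' => eX (XA (φ ω'))) = μ.entH XA :=
    (entH_comp_inj μ' eX heX (fun ω' => XA (φ ω'))).trans (entH_comp μ' μ φ h XA)
  have h2 : μ'.entH (fun ω' => eY (YB (φ ω'))) = μ.entH YB :=
    (entH_comp_inj μ' eY heY (fun ω' => YB (φ ω'))).trans (entH_comp μ' μ φ h YB)
  have hinj : Function.Injective (fun p : A × B => (eX p.1, eY p.2)) := by
    intro p q hpq
    obtain ⟨a, b⟩ := p
    obtain ⟨c, d⟩ := q
    simp only [Prod.mk.injEq] at hpq ⊢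
    exact ⟨heX hpq.1, heY hpq.2⟩
  have h3 : μ'.entH (fun ω' => (eX (XA (φ ω')), eY (YB (φ ω')))) =
      μ.entH (fun ω => (XA ω, YB ω)) :=
    (entH_comp_inj μ' (fun p : A × B => (eX p.1, eY p.2)) hinj
      (fun ω' => (XA (φ ω'), YB (φ ω')))).trans
      (entH_comp μ' μ φ h (X := fun ω => (XA ω, YB ω)))
  simp only [FinPMF.condH]
  rw [h1, h2, h3]

lemma secure_map (μ : FinPMF Ω) (μ' : FinPMF Ω') (φ : Ω' → Ω)
    (h : ∀ ω, μ'.dist φ ω = μ.p ω) {A A' B B' : Type}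
    [Fintype A] [Fintype A'] [Fintype B] [Fintype B']
    {XA : Ω → A} {YB : Ω → B} {X' : Ω' → A'} {Y' : Ω' → B'}
    (eX : A → A') (heX : Function.Injective eX) (eY : B → B') (heY : Function.Injective eY)
    (hX : ∀ ω', X' ω' = eX (XA (φ ω'))) (hY : ∀ ω', Y' ω' = eY (YB (φ ω')))
    (hsec : μ.condH XA YB = μ.entH XA) : μ'.condH X' Y' = μ'.entH X' :=
  (secure_core μ μ' φ h eX heX eY heY hX hY).mpr hsec

lemma secure_unmap (μ : FinPMF Ω) (μ' : FinPMF Ω') (φ : Ω' → Ω)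
    (h : ∀ ω, μ'.dist φ ω = μ.p ω) {A A' B B' : Type}
    [Fintype A] [Fintype A'] [Fintype B] [Fintype B']
    {XA : Ω → A} {YB : Ω → B} {X' : Ω' → A'} {Y' : Ω' → B'}
    (hsec : μ'.condH X' Y' = μ'.entH X')
    (eX : A → A') (heX : Function.Injective eX) (eY : B → B') (heY : Function.Injective eY)
    (hX : ∀ ω', X' ω' = eX (XA (φ ω'))) (hY : ∀ ω', Y' ω' = eY (YB (φ ω'))) :
    μ.condH XA YB = μ.entH XA :=
  (secure_core μ μ' φ h eX heX eY heY hX hY).mp hsec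

end ProbAux

section AugAux

variable (I : NCInstance) (κ : ∀ v : I.V, FinPMF (KeyA I v))

/-- Combine sources and keys of `I` into a source tuple of the augmented instance. -/
def glue (x : I.SrcTuple) (z : KeyTuple I) : (aug I κ).SrcTuple :=
  fun s' => match s' with
  | .inl s => x s
  | .inr v => z v

/-- Split a configuration of the augmented instance into sources and keys of `I`. -/
def phi (ω' : (aug I κ).SrcTuple × KeyTuple (aug I κ)) : I.SrcTuple × KeyTuple I :=
  (fun s => ω'.1 (.inl s), fun v => ω'.1 (.inr v))

lemma glue_phi (ω' : (aug I κ).SrcTuple × KeyTuple (aug I κ)) :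
    glue I κ (phi I κ ω').1 (phi I κ ω').2 = ω'.1 := by
  funext s'
  cases s' <;> rfl

lemma ncP_p_eq (C : NCCode I) (x : I.SrcTuple) (z : KeyTuple I) :
    (ncP I C).p (x, z) = (∏ s, (I.μ s).p (x s)) * ∏ v, (C.κ v).p (z v) := rfl

lemma aug_srcProd (x' : (aug I κ).SrcTuple) :
    (∏ s', ((aug I κ).μ s').p (x' s'))
      = (∏ s, (I.μ s).p (x' (.inl s))) * ∏ v, (κ v).p (x' (.inr v)) :=
  Fintype.prod_sum_type _

lemma dist_phi (C : NCCode I) (hκ : C.κ = κ) (C' : NCCode (aug I κ)) (ω) :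
    (ncP (aug I κ) C').dist (phi I κ) ω = (ncP I C).p ω := by
  subst hκ
  obtain ⟨x, z⟩ := ω
  have hcond : ∀ (x' : (aug I C.κ).SrcTuple) (z' : KeyTuple (aug I C.κ)),
      (phi I C.κ (x', z') = (x, z)) ↔ x' = glue I C.κ x z := by
    intro x' z'
    constructor
    · intro h
      funext s'
      cases s' with
      | inl s => exact congrFun (congrArg Prod.fst h) s
      | inr v => exact congrFun (congrArg Prod.snd h) v
    · intro h
      subst h
      rfl
  have key : (∑ ω' : (aug I C.κ).SrcTuple × KeyTuple (aug I C.κ),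
      if phi I C.κ ω' = (x, z) then (ncP (aug I C.κ) C').p ω' else 0)
        = (ncP I C).p (x, z) := by
    rw [Fintype.sum_prod_type]
    trans (∑ x' : (aug I C.κ).SrcTuple,
      if x' = glue I C.κ x z then (∏ s', ((aug I C.κ).μ s').p (x' s')) else 0)
    · refine Finset.sum_congr rfl fun x' _ => ?_
      by_cases hx : x' = glue I C.κ x z
      · rw [if_pos hx]
        have h2 : ∀ z' ∈ (Finset.univ : Finset (KeyTuple (aug I C.κ))),
            (if phi I C.κ (x', z') = (x, z) then (ncP (aug I C.κ) C').p (x', z') else 0)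
              = (∏ s', ((aug I C.κ).μ s').p (x' s')) * ∏ v, (C'.κ v).p (z' v) :=
          fun z' _ => by rw [if_pos ((hcond x' z').mpr hx)]; rfl
        have hone : ∑ i : KeyTuple (aug I C.κ), ∏ v, (C'.κ v).p (i v) = 1 :=
          (piPMF C'.κ).sum_one
        rw [Finset.sum_congr rfl h2, ← Finset.mul_sum, hone, mul_one]
      · rw [if_neg hx]
        exact Finset.sum_eq_zero fun z' _ => by
          rw [if_neg (fun hc => hx ((hcond x' z').mp hc))]
    · rw [Finset.sum_ite_eq' Finset.univ (glue I C.κ x z)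
        (fun x' => ∏ s', ((aug I C.κ).μ s').p (x' s')), if_pos (Finset.mem_univ _)]
      rw [aug_srcProd, ncP_p_eq]
      rfl
  unfold FinPMF.dist FinPMF.prob
  convert key using 3

end AugAux

section GlobalAux

variable {J : NCInstance}

/-- A deterministic code's global encoding functions do not depend on the keys. -/
lemma Xe_key_indep {C : NCCode J} {Xe : GlobalEnc J} (hG : C.IsGlobal Xe)
    (hD : C.Deterministic) (e : J.E) (x : J.SrcTuple) (z z' : KeyTuple J) :
    Xe e x z = Xe e x z' := by
  have key : ∀ N : ℕ, ∀ e : J.E, J.ord (J.tail e) < N → ∀ z z' : KeyTuple J,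
      Xe e x z = Xe e x z' := by
    intro N
    induction N with
    | zero => intro e he; omega
    | succ N ih =>
      intro e he z z'
      rw [hG e x z, hG e x z']
      have h1 : (fun e' : J.InE (J.tail e) => Xe e'.1 x z)
          = fun e' : J.InE (J.tail e) => Xe e'.1 x z' := by
        funext e'
        refine ih e'.1 ?_ z z'
        have := J.acyclic e'.1
        rw [e'.2] at this
        omega
      rw [h1]
      exact hD e _ _ _ _
  exact key (J.ord (J.tail e) + 1) e (Nat.lt_succ_self _) z z'

/-- The message on an edge only depends on sources originating at nodes of
topological order at most that of the edge's tail. -/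
lemma Xe_local {C : NCCode J} {Xe : GlobalEnc J} (hG : C.IsGlobal Xe)
    (e : J.E) (x₁ x₂ : J.SrcTuple) (z : KeyTuple J)
    (hagree : ∀ s', J.ord (J.O s') ≤ J.ord (J.tail e) → x₁ s' = x₂ s') :
    Xe e x₁ z = Xe e x₂ z := by
  have key : ∀ N : ℕ, ∀ e : J.E, J.ord (J.tail e) < N →
      (∀ s', J.ord (J.O s') ≤ J.ord (J.tail e) → x₁ s' = x₂ s') →
      Xe e x₁ z = Xe e x₂ z := by
    intro N
    induction N with
    | zero => intro e he; omega
    | succ N ih =>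
      intro e he hag
      rw [hG e x₁ z, hG e x₂ z]
      have h1 : (fun e' : J.InE (J.tail e) => Xe e'.1 x₁ z)
          = fun e' : J.InE (J.tail e) => Xe e'.1 x₂ z := by
        funext e'
        have hlt : J.ord (J.tail e'.1) < J.ord (J.tail e) := by
          have := J.acyclic e'.1
          rw [e'.2] at this
          exact this
        exact ih e'.1 (by omega) fun s' hs' => hag s' (le_of_lt (lt_of_le_of_lt hs' hlt))
      have h2 : (fun s : J.SrcAt (J.tail e) => x₁ s.1)
          = fun s : J.SrcAt (J.tail e) => x₂ s.1 := by
        funext s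
        exact hag s.1 (by rw [s.2])
      rw [h1, h2]
  exact key (J.ord (J.tail e) + 1) e (Nat.lt_succ_self _) hagree

end GlobalAux

section EavesAux

variable (I : NCInstance)

/-- Reindexing of eavesdropped source tuples from `I` to the augmented instance. -/
def eA (r : I.Rε) (y : ∀ s : (I.A r : Finset I.S), I.Msg s.1) :
    ∀ s' : (((I.A r).image Sum.inl : Finset (augS I)) : Finset (augS I)),
      alpha (augR I s'.1) I.n :=
  fun s' => match s' with
  | ⟨.inl s, h⟩ => y ⟨s, by simpa using h⟩
  | ⟨.inr v, h⟩ => absurd h (by simp)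

lemma eA_inj (r : I.Rε) : Function.Injective (eA I r) := by
  intro y y' h
  funext s
  exact congrFun h ⟨Sum.inl s.1, Finset.mem_image_of_mem _ s.2⟩

end EavesAux

end

set_option maxHeartbeats 1000000

/-! ### Statement 6: randomised codes for `I` correspond to deterministic codes for the
augmented instance `I'` -/

/-- **Statement 6.**  Let `I` be a secure network-coding instance and `aug I κ` its
augmented instance, where `κ v` is the distribution of the random key `Z_v` (so that the
additional source `X'_{S̄+v}`, of rate `k_v`, is distributed as `Z_v`, while
`R'_s = R_s` for the original sources `s ∈ S`).  Then `I` admits a valid secure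
(possibly randomised) network code with key distributions `κ`, source rates `R_S` and
block size `n` if and only if `aug I κ` admits a valid secure *deterministic* network
code with source rates `R'_{S'}` and block size `n`: the randomness `Z_v` used at each
node `v` of `I` is realised by the additional source `X'_{S̄+v}` of `aug I κ`, and
conversely. -/
theorem ncFeasible_iff_aug_deterministic_feasible (I : NCInstance)
    (κ : ∀ v : I.V, FinPMF (KeyA I v)) :
    (∃ (C : NCCode I) (Xe : GlobalEnc I), C.κ = κ ∧ C.ValidWith Xe ∧ C.SecureWith Xe)
      ↔ (∃ (C' : NCCode (aug I κ)) (Xe' : GlobalEnc (aug I κ)),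
            C'.Deterministic ∧ C'.ValidWith Xe' ∧ C'.SecureWith Xe') := by
  classical
  constructor
  · rintro ⟨C, Xe, hκ, ⟨hG, hV⟩, hS⟩
    subst hκ
    let C' : NCCode (aug I C.κ) :=
      { κ := C.κ
        f := fun e ins srcs _ => C.f e ins (fun s => srcs ⟨.inl s.1, s.2⟩)
               (srcs ⟨.inr (I.tail e), rfl⟩)
        g := fun v ins srcs d =>
          match d with
          | ⟨.inl s, h⟩ => C.g v ins (fun s' => srcs ⟨.inl s'.1, s'.2⟩) ⟨s, h⟩
          | ⟨.inr v', h⟩ => absurd h (Finset.notMem_empty _) }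
    refine ⟨C', fun e x' _ => Xe e (fun s => x' (.inl s)) (fun v => x' (.inr v)),
            ?_, ⟨?_, ?_⟩, ?_⟩
    · intro e ins srcs z z'
      rfl
    · intro e x' z'
      exact hG e _ _
    · intro x' z' hp v d
      have hp' : 0 < (∏ s', ((aug I C.κ).μ s').p (x' s')) * ∏ u, (C'.κ u).p (z' u) := hp
      have ha : 0 < ∏ s', ((aug I C.κ).μ s').p (x' s') := by
        rcases mul_pos_iff.mp hp' with ⟨h1, _⟩ | ⟨h1, _⟩
        · exact h1
        · exact absurd (Finset.prod_nonneg fun s' _ => ((aug I C.κ).μ s').nonneg _)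
            (not_le.mpr h1)
      rw [aug_srcProd] at ha
      have hpos : 0 < (ncP I C).p (fun s => x' (.inl s), fun u => x' (.inr u)) := ha
      rcases d with ⟨sv, hd⟩
      cases sv with
      | inl s => exact hV _ _ hpos v ⟨s, hd⟩
      | inr v' => exact absurd hd (Finset.notMem_empty _)
    · intro r
      refine secure_map (ncP I C) (ncP (aug I C.κ) C') (phi I C.κ)
        (fun ω => dist_phi I C.κ C rfl C' ω) (eA I r) (eA_inj I r)
        id (fun _ _ hid => hid) ?_ ?_ (hS r)
      · intro ω'
        funext s'
        rcases s' with ⟨sv, hs'⟩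
        cases sv with
        | inl s => rfl
        | inr u => exact absurd hs' (by simp [aug]; intro hc; obtain ⟨a, _, ha⟩ := Finset.mem_image.mp hc; exact Sum.inl_ne_inr ha)
      · intro ω'
        rfl
  · rintro ⟨C', Xe', hdet, ⟨hG', hV'⟩, hS'⟩
    letI dE : DecidableEq (augS I) := Classical.decEq _
    choose z₀ hz₀ using fun v : I.V => (κ v).exists_pos
    choose zκ hzκ using fun v : (aug I κ).V => (C'.κ v).exists_pos
    let C : NCCode I :=
      { κ := κ
        f := fun e ins srcs z => C'.f e ins
            (fun s' => match s' with
              | ⟨.inl s, h⟩ => srcs ⟨s, h⟩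
              | ⟨.inr u, h⟩ => cast (congrArg (fun w => alpha (kRate I w) I.n)
                  (show u = I.tail e from h)).symm z)
            (zdef (aug I κ) (I.tail e))
        g := fun v ins srcs d => C'.g v ins
            (fun s' => match s' with
              | ⟨.inl s, h⟩ => srcs ⟨s, h⟩
              | ⟨.inr u, _⟩ => z₀ u)
            ⟨.inl d.1, d.2⟩ }
    refine ⟨C, fun e x z => Xe' e (glue I κ x z) (zdef (aug I κ)), rfl, ⟨?_, ?_⟩, ?_⟩
    · -- IsGlobal
      intro e x z
      show Xe' e (glue I κ x z) (zdef (aug I κ))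
          = C.f e (fun e' => Xe' e'.1 (glue I κ x z) (zdef (aug I κ)))
            (fun s => x s.1) (z (I.tail e))
      rw [hG' e (glue I κ x z) (zdef (aug I κ))]
      have hsrc : (fun s' : (aug I κ).SrcAt ((aug I κ).tail e) => glue I κ x z s'.1)
          = fun s' : (aug I κ).SrcAt ((aug I κ).tail e) =>
              (match s' with
                | ⟨.inl s, h⟩ => (fun s : I.SrcAt (I.tail e) => x s.1) ⟨s, h⟩
                | ⟨.inr u, h⟩ => cast (congrArg (fun w => alpha (kRate I w) I.n)
                    (show u = I.tail e from h)).symm (z (I.tail e))) := by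
        funext s'
        rcases s' with ⟨sv, h⟩
        cases sv with
        | inl s => rfl
        | inr u =>
          have hu : u = I.tail e := h
          subst hu
          rfl
      exact congrArg (fun srcs => C'.f e (fun e' => Xe' e'.1 (glue I κ x z) (zdef (aug I κ)))
        srcs (zdef (aug I κ) (I.tail e))) hsrc
    · -- Validity
      intro x z hp v d
      have hp' : 0 < (∏ s, (I.μ s).p (x s)) * ∏ u, (κ u).p (z u) := hp
      obtain ⟨hsx, hzx⟩ := two_prod_pos (fun s => (I.μ s).nonneg _)
        (fun u => (κ u).nonneg _) hp'
      set x1 : (aug I κ).SrcTuple := glue I κ x z with hx1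
      set x2 : (aug I κ).SrcTuple := Function.update x1 (Sum.inr v) (z₀ v) with hx2
      have hx2inl : ∀ s, x2 (Sum.inl s) = x s := by
        intro s
        rw [hx2]; exact Function.update_of_ne (fun hc => Sum.inl_ne_inr hc) _ _
      have hx2inr : ∀ u, u ≠ v → x2 (Sum.inr u) = z u := by
        intro u hu
        rw [hx2]; exact Function.update_of_ne (fun hc => hu (Sum.inr.inj hc)) _ _
      have hx2v : x2 (Sum.inr v) = z₀ v := by
        rw [hx2]; exact Function.update_self _ _ _
      have hpos2 : 0 < (ncP (aug I κ) C').p (x2, zκ) := by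
        have heq : (ncP (aug I κ) C').p (x2, zκ)
            = ((∏ s, (I.μ s).p (x2 (.inl s))) * ∏ u, (κ u).p (x2 (.inr u)))
              * ∏ u, (C'.κ u).p (zκ u) := by
          rw [← aug_srcProd]
          rfl
        rw [heq]
        refine mul_pos (mul_pos (Finset.prod_pos fun s _ => ?_)
          (Finset.prod_pos fun u _ => ?_)) (Finset.prod_pos fun u _ => hzκ u)
        · rw [hx2inl]
          exact hsx s
        · by_cases hu : u = v
          · subst hu
            rw [hx2v]
            exact hz₀ u
          · rw [hx2inr u hu]
            exact hzx u
      have hedge : (fun e' : (aug I κ).InE v => Xe' e'.1 x1 (zdef (aug I κ)))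
          = fun e' : (aug I κ).InE v => Xe' e'.1 x2 zκ := by
        funext e'
        have k1 : Xe' e'.1 x1 (zdef (aug I κ)) = Xe' e'.1 x1 zκ :=
          Xe_key_indep hG' hdet e'.1 x1 _ _
        have hlt : I.ord (I.tail e'.1) < I.ord v := by
          have h1 := (aug I κ).acyclic e'.1
          have h2 : I.head e'.1 = v := e'.2
          rw [show (aug I κ).head e'.1 = I.head e'.1 from rfl, h2] at h1
          exact h1
        have k2 : Xe' e'.1 x1 zκ = Xe' e'.1 x2 zκ := by
          refine Xe_local hG' e'.1 x1 x2 zκ fun s' hs' => ?_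
          have hne : s' ≠ Sum.inr v := by
            intro hc
            subst hc
            have : I.ord v ≤ I.ord (I.tail e'.1) := hs'
            omega
          rw [hx2]; exact (Function.update_of_ne hne _ _).symm
        exact k1.trans k2
      have hsrc : (fun s' : (aug I κ).SrcAt v =>
            (match s' with
              | ⟨.inl s, h⟩ => (fun s' : I.SrcAt v => x s'.1) ⟨s, h⟩
              | ⟨.inr u, _⟩ => z₀ u))
          = fun s' : (aug I κ).SrcAt v => x2 s'.1 := by
        funext s'
        rcases s' with ⟨sv, h⟩
        cases sv with
        | inl s => exact (hx2inl s).symm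
        | inr u =>
          have hu : u = v := h
          subst hu
          exact hx2v.symm
      have hdec := hV' x2 zκ hpos2 v ⟨.inl d.1, d.2⟩
      have hstep : C.g v (fun e' => Xe' e'.1 (glue I κ x z) (zdef (aug I κ)))
            (fun s' => x s'.1) d
          = C'.g v (fun e' => Xe' e'.1 x2 zκ) (fun s' => x2 s'.1) ⟨.inl d.1, d.2⟩ := by
        exact congrFun (congrArg₂ (C'.g v) hedge hsrc) ⟨.inl d.1, d.2⟩
      have hxd : x2 (Sum.inl d.1) = x d.1 := hx2inl d.1
      exact hstep.trans (hdec.trans hxd)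
    · -- Security
      intro r
      refine secure_unmap (ncP I C) (ncP (aug I κ) C') (phi I κ)
        (fun ω => dist_phi I κ C rfl C' ω) (hS' r) (eA I r) (eA_inj I r)
        id (fun _ _ hid => hid) ?_ ?_
      · intro ω'
        funext s'
        rcases s' with ⟨sv, hs'⟩
        cases sv with
        | inl s => rfl
        | inr u => exact absurd hs' (by simp [aug]; intro hc; obtain ⟨a, _, ha⟩ := (@Finset.mem_image _ _ (fun a b => instDecidableEqSum a b) _ _ _).mp hc; exact Sum.inl_ne_inr ha)
      · intro ω'
        funext e
        show Xe' e.1 ω'.1 ω'.2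
            = Xe' e.1 (glue I κ (phi I κ ω').1 (phi I κ ω').2) (zdef (aug I κ))
        rw [glue_phi]
        exact Xe_key_indep hG' hdet e.1 ω'.1 ω'.2 (zdef (aug I κ))
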